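/- For θ ∈ (0, π/2) and a square Q of side h in ℝ² with sides parallel to the axes, the function g(t) = |ℓ(θ,t) ∩ Q| (length of intersection of the line ℓ(θ,t) = proj_θ^{-1}(t) with Q) is Lipschitz with constant 1/(sin θ · cos θ). -/

import Mathlib

open MeasureTheory

/-- Orthogonal projection in direction `θ`: `ℓ(θ,t) = proj θ ⁻¹ {t}` is the line in direction
`(cos θ, sin θ)` through `t·(-sin θ, cos θ)`. -/
noncomputable def proj (θ : ℝ) (p : ℝ × ℝ) : ℝ := -p.1 * Real.sin θ + p.2 * Real.cos θ

/-- The line `ℓ(θ,t) = proj_θ⁻¹(t)`. -/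
def lineSet (θ t : ℝ) : Set (ℝ × ℝ) := {p | proj θ p = t}

/-- Length (1-dimensional Lebesgue measure) of `ℓ(θ,t) ∩ K`, computed via the unit-speed
parametrization `u ↦ t·(-sin θ, cos θ) + u·(cos θ, sin θ)` of the line `ℓ(θ,t)`. -/
noncomputable def lineLen (θ t : ℝ) (K : Set (ℝ × ℝ)) : ENNReal :=
  volume {u : ℝ |
    (t * (-Real.sin θ) + u * Real.cos θ, t * Real.cos θ + u * Real.sin θ) ∈ K}

/-- The closed grid square of `D_k` (the `L^k × L^k` grid of `[0,1]²`) with lower-left corner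
`(a/L^k, b/L^k)`. -/
def gridSq (L k a b : ℕ) : Set (ℝ × ℝ) :=
  Set.Icc ((a : ℝ) / (L : ℝ) ^ k) (((a : ℝ) + 1) / (L : ℝ) ^ k) ×ˢ
    Set.Icc ((b : ℝ) / (L : ℝ) ^ k) (((b : ℝ) + 1) / (L : ℝ) ^ k)

lemma min_sub_max (a a' b b' : ℝ) :
    min b b' - max a a' = min (min (b - a) (b - a')) (min (b' - a) (b' - a')) := by
  rcases le_total a a' with h1 | h1 <;> rcases le_total b b' with h2 | h2 <;>
    simp [min_def, max_def] <;> split_ifs <;> linarith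

/-- For `θ ∈ (0, π/2)` and an axis-parallel square `Q` of side `h`, the chord-length function
`t ↦ |ℓ(θ,t) ∩ Q|` is Lipschitz with constant `1/(sin θ · cos θ)`. -/
theorem stmt11 (θ : ℝ) (hθ : θ ∈ Set.Ioo 0 (Real.pi / 2)) (x y h : ℝ) (hh : 0 < h) :
    LipschitzWith (Real.toNNReal (1 / (Real.sin θ * Real.cos θ)))
      (fun t => (lineLen θ t (Set.Icc x (x + h) ×ˢ Set.Icc y (y + h))).toReal) := by
  obtain ⟨hθ0, hθ1⟩ := hθ
  have hpi := Real.pi_pos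
  have hs : 0 < Real.sin θ := Real.sin_pos_of_pos_of_lt_pi hθ0 (by linarith)
  have hc : 0 < Real.cos θ := Real.cos_pos_of_mem_Ioo ⟨by linarith, hθ1⟩
  set s := Real.sin θ with hsd
  set c := Real.cos θ with hcd
  have hK : 0 < 1 / (s * c) := by positivity
  have hKc : ((Real.toNNReal (1 / (s * c))) : ℝ) = 1 / (s * c) :=
    Real.coe_toNNReal _ hK.le
  set a1 : ℝ → ℝ := fun t => (x + t * s) / c with ha1
  set a2 : ℝ → ℝ := fun t => (y - t * c) / s with ha2
  set b1 : ℝ → ℝ := fun t => (x + h + t * s) / c with hb1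
  set b2 : ℝ → ℝ := fun t => (y + h - t * c) / s with hb2
  have key : ∀ t, (lineLen θ t (Set.Icc x (x + h) ×ˢ Set.Icc y (y + h))).toReal
      = max (min (min (b1 t - a1 t) (b1 t - a2 t)) (min (b2 t - a1 t) (b2 t - a2 t))) 0 := by
    intro t
    have hset : {u : ℝ |
        (t * (-s) + u * c, t * c + u * s) ∈ Set.Icc x (x + h) ×ˢ Set.Icc y (y + h)}
        = Set.Icc (max (a1 t) (a2 t)) (min (b1 t) (b2 t)) := by
      ext u
      simp only [Set.mem_setOf_eq, Set.mem_prod, Set.mem_Icc, max_le_iff, le_min_iff,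
        ha1, ha2, hb1, hb2, div_le_iff₀ hc, div_le_iff₀ hs, le_div_iff₀ hc, le_div_iff₀ hs]
      constructor
      · rintro ⟨⟨h1, h2⟩, h3, h4⟩
        refine ⟨⟨by linarith, by linarith⟩, by linarith, by linarith⟩
      · rintro ⟨⟨h1, h2⟩, h3, h4⟩
        refine ⟨⟨by linarith, by linarith⟩, by linarith, by linarith⟩
    rw [lineLen, hset, Real.volume_Icc, ENNReal.toReal_ofReal', min_sub_max]
  simp only [funext key]
  apply LipschitzWith.of_dist_le_mul
  intro t1 t2
  rw [Real.dist_eq, Real.dist_eq, hKc]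
  have hsc : s ^ 2 + c ^ 2 = 1 := Real.sin_sq_add_cos_sq θ
  have e11 : b1 t1 - a1 t1 - (b1 t2 - a1 t2) = 0 := by
    simp only [ha1, hb1]; field_simp; ring
  have e22 : b2 t1 - a2 t1 - (b2 t2 - a2 t2) = 0 := by
    simp only [ha2, hb2]; field_simp; ring
  have e12 : b1 t1 - a2 t1 - (b1 t2 - a2 t2) = (1 / (s * c)) * (t1 - t2) := by
    simp only [ha2, hb1]; field_simp; linear_combination (t1 - t2) * hsc
  have e21 : b2 t1 - a1 t1 - (b2 t2 - a1 t2) = -((1 / (s * c)) * (t1 - t2)) := by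
    simp only [ha1, hb2]; field_simp; linear_combination (t2 - t1) * hsc
  have hbnd : (1 / (s * c)) * |t1 - t2| = |(1 / (s * c)) * (t1 - t2)| := by
    rw [abs_mul, abs_of_pos hK]
  calc |max (min (min (b1 t1 - a1 t1) (b1 t1 - a2 t1)) (min (b2 t1 - a1 t1) (b2 t1 - a2 t1))) 0
        - max (min (min (b1 t2 - a1 t2) (b1 t2 - a2 t2)) (min (b2 t2 - a1 t2) (b2 t2 - a2 t2))) 0|
      ≤ max |min (min (b1 t1 - a1 t1) (b1 t1 - a2 t1)) (min (b2 t1 - a1 t1) (b2 t1 - a2 t1))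
        - min (min (b1 t2 - a1 t2) (b1 t2 - a2 t2)) (min (b2 t2 - a1 t2) (b2 t2 - a2 t2))| |(0:ℝ) - 0| :=
        abs_max_sub_max_le_max _ _ _ _
    _ ≤ 1 / (s * c) * |t1 - t2| := by
        rw [hbnd]
        apply max_le
        · refine le_trans (abs_min_sub_min_le_max _ _ _ _) (max_le ?_ ?_)
          · refine le_trans (abs_min_sub_min_le_max _ _ _ _) (max_le ?_ ?_)
            · rw [e11]; simp [abs_nonneg]; positivity
            · rw [e12]
          · refine le_trans (abs_min_sub_min_le_max _ _ _ _) (max_le ?_ ?_)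
            · rw [e21, abs_neg]
            · rw [e22]; simp [abs_nonneg]; positivity
        · simp [abs_nonneg]; positivity
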